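/- Let μ ∈ [0,1], β ≥ 0, τ > Δ₀ ≥ 0, α_r ≥ 1, α_c ≥ 1, and suppose (τ − Δ₀)(α_r − 1) ≥ 1 + α_c. Then (τ − Δ₀)/((τ − Δ₀) + (1 + α_c)β) · (μ + (α_r − 1)β) ≥ μ. -/
import Mathlib

/-- Algebraic core of the F-UCB optimism argument. -/
theorem fucb_optimism_core (μ β τ Δ₀ αr αc : ℝ)
    (hμ : μ ∈ Set.Icc (0 : ℝ) 1) (hβ : 0 ≤ β)
    (hΔ₀ : 0 ≤ Δ₀) (hτ : Δ₀ < τ)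
    (hαr : 1 ≤ αr) (hαc : 1 ≤ αc)
    (hcond : 1 + αc ≤ (τ - Δ₀) * (αr - 1)) :
    μ ≤ (τ - Δ₀) / ((τ - Δ₀) + (1 + αc) * β) * (μ + (αr - 1) * β) := by
  obtain ⟨h0, h1⟩ := hμ
  have ht : 0 < τ - Δ₀ := by linarith
  have hden : 0 < (τ - Δ₀) + (1 + αc) * β := by nlinarith
  rw [div_mul_eq_mul_div, le_div_iff₀ hden]
  nlinarith [mul_nonneg hβ (sub_nonneg.2 hcond), mul_nonneg (mul_nonneg (sub_nonneg.2 h1) (by linarith : (0:ℝ) ≤ 1 + αc)) hβ]
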